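/- Let ρ > 0, θ, f ∈ ℝ, a_L < a_R, and let u(·|f, u⁰, u¹) be the solution to u = f + ρ(u'' − θu') with u(a_R) = u⁰, u'(a_R) = u¹. Then u(a_L|f, u⁰, u¹) is strictly increasing in u⁰ and strictly decreasing in f and in u¹, while u'(a_L|f, u⁰, u¹) is strictly decreasing in u⁰ and strictly increasing in f and in u¹. -/

import Mathlib

/-- A function whose derivative is `r` times itself, multiplied by the
integrating factor `exp (-r a)`, is constant. -/
private lemma first_order_const {r : ℝ} {F : ℝ → ℝ}
    (hF : ∀ a, HasDerivAt F (r * F a) a) (a b : ℝ) :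
    F a * Real.exp (-r * a) = F b * Real.exp (-r * b) := by
  have key : ∀ x : ℝ, HasDerivAt (fun t => F t * Real.exp (-r * t)) 0 x := by
    intro x
    have h0 : HasDerivAt (fun t : ℝ => -r * t) (-r) x := by
      simpa using (hasDerivAt_id x).const_mul (-r)
    have h1 : HasDerivAt (fun t : ℝ => Real.exp (-r * t)) (Real.exp (-r * x) * (-r)) x :=
      (Real.hasDerivAt_exp (-r * x)).comp x h0
    have h2 := (hF x).mul h1
    refine HasDerivAt.congr_deriv h2 ?_
    ring
  exact is_const_of_deriv_eq_zero (fun x => (key x).differentiableAt)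
    (fun x => (key x).deriv) a b

/-- Explicit solution formulas for `z'' = θ z' + z / ρ` with characteristic
roots `p` and `-q`. -/
private lemma ode_solve (ρ θ aL aR p q : ℝ)
    (hpq : p * q * ρ = 1) (hθ : p - q = θ) (hρ : ρ ≠ 0)
    (z z' : ℝ → ℝ)
    (hz : ∀ a, HasDerivAt z (z' a) a)
    (hz' : ∀ a, HasDerivAt z' (θ * z' a + z a / ρ) a) :
    (p + q) * z aL
      = (z' aR + q * z aR) * Real.exp (p * (aL - aR))
        - (z' aR - p * z aR) * Real.exp (-q * (aL - aR)) ∧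
    (p + q) * z' aL
      = p * (z' aR + q * z aR) * Real.exp (p * (aL - aR))
        + q * (z' aR - p * z aR) * Real.exp (-q * (aL - aR)) := by
  have hdiv : ∀ a, z a / ρ = p * q * z a := by
    intro a
    rw [div_eq_iff hρ]
    linear_combination (-(z a)) * hpq
  -- Y := z' + q z satisfies Y' = p Y
  have hY : ∀ a, HasDerivAt (fun t => z' t + q * z t) (p * (z' a + q * z a)) a := by
    intro a
    have h := (hz' a).add ((hz a).const_mul q)
    refine HasDerivAt.congr_deriv h ?_
    rw [hdiv a, ← hθ]
    ring
  -- X := z' - p z satisfies X' = -q X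
  have hX : ∀ a, HasDerivAt (fun t => z' t - p * z t) (-q * (z' a - p * z a)) a := by
    intro a
    have h := (hz' a).sub ((hz a).const_mul p)
    refine HasDerivAt.congr_deriv h ?_
    rw [hdiv a, ← hθ]
    ring
  have hEY := first_order_const hY aL aR
  have hEX := first_order_const hX aL aR
  have hEX' : (z' aL - p * z aL) * Real.exp (q * aL)
      = (z' aR - p * z aR) * Real.exp (q * aR) := by
    simpa [neg_neg] using hEX
  have eq1 : z' aL + q * z aL = (z' aR + q * z aR) * Real.exp (p * (aL - aR)) := by
    have h1 := congrArg (fun t => t * Real.exp (p * aL)) hEY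
    calc z' aL + q * z aL
        = (z' aL + q * z aL) * Real.exp (-p * aL) * Real.exp (p * aL) := by
          rw [mul_assoc, ← Real.exp_add, show -p * aL + p * aL = 0 by ring,
            Real.exp_zero, mul_one]
      _ = (z' aR + q * z aR) * Real.exp (-p * aR) * Real.exp (p * aL) := h1
      _ = (z' aR + q * z aR) * Real.exp (p * (aL - aR)) := by
          rw [mul_assoc, ← Real.exp_add, show -p * aR + p * aL = p * (aL - aR) by ring]
  have eq2 : z' aL - p * z aL = (z' aR - p * z aR) * Real.exp (-q * (aL - aR)) := by
    have h1 := congrArg (fun t => t * Real.exp (-q * aL)) hEX'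
    calc z' aL - p * z aL
        = (z' aL - p * z aL) * Real.exp (q * aL) * Real.exp (-q * aL) := by
          rw [mul_assoc, ← Real.exp_add, show q * aL + -q * aL = 0 by ring,
            Real.exp_zero, mul_one]
      _ = (z' aR - p * z aR) * Real.exp (q * aR) * Real.exp (-q * aL) := h1
      _ = (z' aR - p * z aR) * Real.exp (-q * (aL - aR)) := by
          rw [mul_assoc, ← Real.exp_add, show q * aR + -q * aL = -q * (aL - aR) by ring]
  constructor
  · linear_combination eq1 - eq2
  · linear_combination p * eq1 + q * eq2

set_option maxHeartbeats 2000000 in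
/-- Lemma `ode-ranking-right`: Let `u` and `v` solve
`ρ(w'' − θw') = w − f` with respective forcing terms and terminal data at `a_R`.
Then, at any `a_L < a_R`, the value is strictly increasing in the terminal value
`u⁰` and strictly decreasing in `f` and in the terminal derivative `u¹`, while
the derivative is strictly decreasing in `u⁰` and strictly increasing in `f`
and in `u¹`. -/
theorem ode_ranking_monotone (ρ θ aR : ℝ) (hρ : 0 < ρ)
    (f g u0 v0 u1 v1 : ℝ)
    (u v : ℝ → ℝ) (hu : ContDiff ℝ 2 u) (hv : ContDiff ℝ 2 v)
    (hODEu : ∀ a : ℝ, ρ * (deriv (deriv u) a - θ * deriv u a) = u a - f)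
    (hODEv : ∀ a : ℝ, ρ * (deriv (deriv v) a - θ * deriv v a) = v a - g)
    (hvalu : u aR = u0) (hderu : deriv u aR = u1)
    (hvalv : v aR = v0) (hderv : deriv v aR = v1) :
    ∀ aL : ℝ, aL < aR →
      -- strictly increasing in the terminal value `u⁰`
      ((f = g ∧ u1 = v1 ∧ u0 < v0) → (u aL < v aL ∧ deriv v aL < deriv u aL)) ∧
      -- strictly decreasing in the forcing term `f`
      ((u0 = v0 ∧ u1 = v1 ∧ f < g) → (v aL < u aL ∧ deriv u aL < deriv v aL)) ∧
      -- strictly decreasing in the terminal derivative `u¹`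
      ((f = g ∧ u0 = v0 ∧ u1 < v1) → (v aL < u aL ∧ deriv u aL < deriv v aL)) := by
  intro aL haL
  have hρ' : ρ ≠ 0 := hρ.ne'
  -- characteristic roots p > 0 and -q < 0
  obtain ⟨p, q, hp, hq, hpq, hθeq⟩ :
      ∃ p q : ℝ, 0 < p ∧ 0 < q ∧ p * q * ρ = 1 ∧ p - q = θ := by
    have hD2 : (Real.sqrt (θ ^ 2 + 4 / ρ)) ^ 2 = θ ^ 2 + 4 / ρ :=
      Real.sq_sqrt (by positivity)
    have hD0 : 0 ≤ Real.sqrt (θ ^ 2 + 4 / ρ) := Real.sqrt_nonneg _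
    have h4ρ : 0 < 4 / ρ := by positivity
    have hD2ρ : (Real.sqrt (θ ^ 2 + 4 / ρ)) ^ 2 * ρ = θ ^ 2 * ρ + 4 := by
      rw [hD2]; field_simp
    refine ⟨(θ + Real.sqrt (θ ^ 2 + 4 / ρ)) / 2, (Real.sqrt (θ ^ 2 + 4 / ρ) - θ) / 2,
      by nlinarith, by nlinarith, by linear_combination hD2ρ / 4, by ring⟩
  -- differentiability facts
  have hud : Differentiable ℝ u := hu.differentiable (by norm_num)
  have hvd : Differentiable ℝ v := hv.differentiable (by norm_num)
  have hud' : Differentiable ℝ (deriv u) := by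
    have h2 : ContDiff ℝ ((1 : ℕ) + 1) u := by exact_mod_cast hu
    exact ((contDiff_succ_iff_deriv.mp h2).2.2).differentiable (by norm_num)
  have hvd' : Differentiable ℝ (deriv v) := by
    have h2 : ContDiff ℝ ((1 : ℕ) + 1) v := by exact_mod_cast hv
    exact ((contDiff_succ_iff_deriv.mp h2).2.2).differentiable (by norm_num)
  -- the difference z and its derivative z'
  have hz : ∀ a : ℝ, HasDerivAt (fun a => v a - u a - (g - f))
      (deriv v a - deriv u a) a := by
    intro a
    exact (((hvd a).hasDerivAt).sub ((hud a).hasDerivAt)).sub_const _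
  have hz' : ∀ a : ℝ, HasDerivAt (fun a => deriv v a - deriv u a)
      (θ * (deriv v a - deriv u a) + (v a - u a - (g - f)) / ρ) a := by
    intro a
    have h1 : HasDerivAt (fun a => deriv v a - deriv u a)
        (deriv (deriv v) a - deriv (deriv u) a) a :=
      ((hvd' a).hasDerivAt).sub ((hud' a).hasDerivAt)
    convert h1 using 1
    have e1 := hODEu a
    have e2 := hODEv a
    have key : v a - u a - (g - f)
        = (deriv (deriv v) a - deriv (deriv u) a - θ * (deriv v a - deriv u a)) * ρ := by
      linear_combination e1 - e2
    rw [key, mul_div_cancel_right₀ _ hρ']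
    ring
  obtain ⟨Ez, Ez'⟩ := ode_solve ρ θ aL aR p q hpq hθeq hρ' _ _ hz hz'
  simp only [hvalu, hvalv, hderu, hderv] at Ez Ez'
  have hs : aL - aR < 0 := by linarith
  have hE1pos : (0:ℝ) < Real.exp (p * (aL - aR)) := Real.exp_pos _
  have hE2pos : (0:ℝ) < Real.exp (-q * (aL - aR)) := Real.exp_pos _
  have hE1lt1 : Real.exp (p * (aL - aR)) < 1 :=
    Real.exp_lt_one_iff.mpr (by nlinarith)
  have hE2gt1 : (1:ℝ) < Real.exp (-q * (aL - aR)) :=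
    Real.one_lt_exp_iff.mpr (by nlinarith)
  have l1 : p * (aL - aR) + 1 ≤ Real.exp (p * (aL - aR)) := Real.add_one_le_exp _
  have l2 : -q * (aL - aR) + 1 < Real.exp (-q * (aL - aR)) :=
    Real.add_one_lt_exp (ne_of_gt (by nlinarith : (0:ℝ) < -q * (aL - aR)))
  obtain ⟨E1, hE1g⟩ : ∃ E1, Real.exp (p * (aL - aR)) = E1 := ⟨_, rfl⟩
  obtain ⟨E2, hE2g⟩ : ∃ E2, Real.exp (-q * (aL - aR)) = E2 := ⟨_, rfl⟩
  rw [hE1g] at Ez Ez' hE1pos hE1lt1 l1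
  rw [hE2g] at Ez Ez' hE2pos hE2gt1 l2
  clear hE1g hE2g
  have hppq : 0 < p + q := by linarith
  refine ⟨?_, ?_, ?_⟩
  · -- strictly increasing in u0
    rintro ⟨hfg, h1, h0⟩
    subst hfg
    rw [h1] at Ez Ez'
    have hc : 0 < v0 - u0 := sub_pos.mpr h0
    constructor
    · nlinarith [mul_pos (mul_pos hq hc) hE1pos, mul_pos (mul_pos hp hc) hE2pos]
    · nlinarith [mul_pos (mul_pos (mul_pos hp hq) hc)
        (sub_pos.mpr (hE1lt1.trans hE2gt1))]
  · -- strictly decreasing in f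
    rintro ⟨h0, h1, hfg⟩
    rw [h0, h1] at Ez Ez'
    have hh : 0 < g - f := sub_pos.mpr hfg
    have hkey : p + q < q * E1 + p * E2 := by
      nlinarith [mul_le_mul_of_nonneg_left l1 hq.le, mul_lt_mul_of_pos_left l2 hp]
    constructor
    · nlinarith [mul_pos hh (sub_pos.mpr hkey)]
    · nlinarith [mul_pos (mul_pos (mul_pos hp hq) hh)
        (sub_pos.mpr (hE1lt1.trans hE2gt1))]
  · -- strictly decreasing in u1
    rintro ⟨hfg, h0, h1⟩
    subst hfg
    rw [h0] at Ez Ez'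
    have hd : 0 < v1 - u1 := sub_pos.mpr h1
    constructor
    · nlinarith [mul_pos hd (sub_pos.mpr (hE1lt1.trans hE2gt1))]
    · nlinarith [mul_pos (mul_pos hp hd) hE1pos, mul_pos (mul_pos hq hd) hE2pos]
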